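/- arXiv:1907.05546 — 2 statements merged into one kernel-verified Lean document; each statement's English description precedes it below -/
import Mathlib

section
/- For every integer n ≥ 5 and every edge e of the Kneser graph K(n,2), the graph K(n,2)−e contains an induced path on 6 vertices. -/
open SimpleGraph

/-- The Kneser graph `K(n,2)`: vertices are the 2-element subsets of `{1,…,n}`,
adjacent iff disjoint. -/
def kneser (n : ℕ) : SimpleGraph {s : Finset (Fin n) // s.card = 2} where
  Adj u v := Disjoint u.1 v.1
  symm := ⟨fun u v h => Disjoint.symm h⟩
  loopless := by
    constructor
    intro u h
    have h0 : u.1 = ∅ := disjoint_self.mp h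
    have h2 := u.2
    rw [h0] at h2
    simp at h2

lemma finset_pair_eq_pair_iff {α : Type*} [DecidableEq α] {x y z w : α} :
    ({x, y} : Finset α) = {z, w} ↔ x = z ∧ y = w ∨ x = w ∧ y = z := by
  rw [← Finset.coe_inj]
  push_cast
  exact Set.pair_eq_pair_iff

set_option maxHeartbeats 1000000 in
/-- For every integer `n ≥ 5` and every edge of `K(n,2)`, deleting that edge creates an
induced path on 6 vertices. -/
theorem kneser_deleteEdge_induced_P6 (n : ℕ) (hn : 5 ≤ n)
    (u v : {s : Finset (Fin n) // s.card = 2}) (huv : (kneser n).Adj u v) :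
    Nonempty (pathGraph 6 ↪g (kneser n).deleteEdges {s(u, v)}) := by
  obtain ⟨a, b, hab, hu⟩ := Finset.card_eq_two.mp u.2
  obtain ⟨c, d, hcd, hv⟩ := Finset.card_eq_two.mp v.2
  have hdisj : Disjoint u.1 v.1 := huv
  rw [hu, hv] at hdisj
  have hac : a ≠ c := by intro h; subst h; simp [Finset.disjoint_left] at hdisj
  have had : a ≠ d := by intro h; subst h; simp [Finset.disjoint_left] at hdisj
  have hbc : b ≠ c := by intro h; subst h; simp [Finset.disjoint_left] at hdisj
  have hbd : b ≠ d := by intro h; subst h; simp [Finset.disjoint_left] at hdisj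
  -- find a fifth element e
  have hcard : (({a, b, c, d} : Finset (Fin n))).card < Fintype.card (Fin n) := by
    calc (({a, b, c, d} : Finset (Fin n))).card ≤ 4 := by
          apply le_trans (Finset.card_insert_le _ _)
          apply Nat.succ_le_succ
          apply le_trans (Finset.card_insert_le _ _)
          apply Nat.succ_le_succ
          exact Finset.card_insert_le _ _
      _ < Fintype.card (Fin n) := by simp; omega
  have hne : (({a, b, c, d} : Finset (Fin n))ᶜ).Nonempty := by
    rw [← Finset.card_pos, Finset.card_compl]
    exact Nat.sub_pos_of_lt hcard
  obtain ⟨e, he'⟩ := hne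
  have he : e ∉ ({a, b, c, d} : Finset (Fin n)) := Finset.mem_compl.mp he'
  simp only [Finset.mem_insert, Finset.mem_singleton, not_or] at he
  obtain ⟨hea', heb', hec', hed'⟩ := he
  have hae : a ≠ e := fun h => hea' h.symm
  have hbe : b ≠ e := fun h => heb' h.symm
  have hce : c ≠ e := fun h => hec' h.symm
  have hde : d ≠ e := fun h => hed' h.symm
  -- the six vertices
  let f : Fin 6 → {s : Finset (Fin n) // s.card = 2} := fun i =>
    match i with
    | ⟨0, _⟩ => ⟨{a, b}, Finset.card_pair hab⟩
    | ⟨1, _⟩ => ⟨{c, e}, Finset.card_pair hce⟩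
    | ⟨2, _⟩ => ⟨{a, d}, Finset.card_pair had⟩
    | ⟨3, _⟩ => ⟨{b, c}, Finset.card_pair hbc⟩
    | ⟨4, _⟩ => ⟨{a, e}, Finset.card_pair hae⟩
    | ⟨5, _⟩ => ⟨{c, d}, Finset.card_pair hcd⟩
  have hu' : u = ⟨{a, b}, Finset.card_pair hab⟩ := Subtype.ext hu
  have hv' : v = ⟨{c, d}, Finset.card_pair hcd⟩ := Subtype.ext hv
  refine ⟨⟨⟨f, ?_⟩, ?_⟩⟩
  · intro i j hij
    fin_cases i <;> fin_cases j <;>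
      simp only [f, Subtype.mk.injEq, finset_pair_eq_pair_iff] at hij ⊢ <;>
      first
        | rfl
        | (exfalso; revert hij;
           simp [hab, hac, had, hae, hbc, hbd, hbe, hcd, hce, hde,
             hab.symm, hac.symm, had.symm, hae.symm, hbc.symm, hbd.symm,
             hbe.symm, hcd.symm, hce.symm, hde.symm])
  · intro i j
    rw [hu', hv']
    change ((kneser n).deleteEdges _).Adj (f i) (f j) ↔ _
    fin_cases i <;> fin_cases j <;>
      simp only [f] <;>
      simp only [SimpleGraph.deleteEdges_adj, SimpleGraph.pathGraph_adj, kneser,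
        Set.mem_singleton_iff, Sym2.eq_iff, Subtype.mk.injEq, finset_pair_eq_pair_iff,
        Finset.disjoint_insert_left, Finset.disjoint_singleton_left,
        Finset.mem_insert, Finset.mem_singleton] <;>
      simp [finset_pair_eq_pair_iff, hab, hac, had, hae, hbc, hbd, hbe, hcd, hce, hde,
        hab.symm, hac.symm, had.symm, hae.symm, hbc.symm, hbd.symm,
        hbe.symm, hcd.symm, hce.symm, hde.symm]
end

section
/- For every integer n ≥ 2, the graph G_n is vertex-transitive: for every two vertices v and v' of G_n there exists an automorphism φ of G_n (a graph isomorphism from G_n to itself) such that φ(v) = v'. -/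
open SimpleGraph

/-- Vertex set of the graph `Gₙ`: `ℤ₂ × ℤ₂ × ℤ_{2n}`. -/
abbrev GnV (n : ℕ) : Type := ZMod 2 × ZMod 2 × ZMod (2 * n)

/-- The prescribed neighborhood of the vertex `(a, b, j)` in `Gₙ`. -/
def nbhd (n : ℕ) (v : GnV n) : Set (GnV n) :=
  {(1 - v.1, 1 - v.2.1, v.2.2),
   (v.1, 1 - v.2.1, v.2.2),
   (v.1, v.1 + v.2.1, v.2.2 - 1),
   (v.1, v.1 + v.2.1, v.2.2 + 1),
   (1 - v.1, v.1 + v.2.1, v.2.2 + if v.1 = 0 then 2 else -2)}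

/-- The graph `Gₙ` on `ℤ₂ × ℤ₂ × ℤ_{2n}`, where the neighborhood of `(a,b,j)` is exactly
`{(1-a,1-b,j), (a,1-b,j), (a,a+b,j-1), (a,a+b,j+1), (1-a,a+b,j+2(-1)^a)}`
(this relation is symmetric, and for `n ≥ 2` no vertex lies in its own neighborhood). -/
def Gn (n : ℕ) : SimpleGraph (GnV n) where
  Adj u v := u ≠ v ∧ (u ∈ nbhd n v ∨ v ∈ nbhd n u)
  symm := by
    refine ⟨?_⟩
    intro u v h
    exact ⟨Ne.symm h.1, h.2.symm⟩
  loopless := by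
    refine ⟨?_⟩
    intro u h
    exact h.1 rfl

/- ### Auxiliary material for the proof -/

lemma zmod2_cases (a : ZMod 2) : a = 0 ∨ a = 1 := by revert a; decide

/-- Reduction mod 2 from `ZMod (2*n)`. -/
def pr (n : ℕ) : ZMod (2 * n) →+* ZMod 2 := ZMod.castHom ⟨n, rfl⟩ (ZMod 2)

lemma pr_two {n : ℕ} : pr n (2 : ZMod (2 * n)) = 0 := by
  have : ((2 : ZMod (2 * n))) = ((2 : ℕ) : ZMod (2 * n)) := by norm_num
  rw [this, pr, map_natCast]
  decide

/-- Translation in the last coordinate together with a shift in the middle coordinate. -/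
def tmap (n : ℕ) (c : ZMod 2) (t : ZMod (2 * n)) : GnV n ≃ GnV n where
  toFun v := (v.1, v.2.1 + c, v.2.2 + t)
  invFun v := (v.1, v.2.1 - c, v.2.2 - t)
  left_inv v := by obtain ⟨a, b, j⟩ := v; simp
  right_inv v := by obtain ⟨a, b, j⟩ := v; simp

/-- The `a`-flip: `(a, b, j) ↦ (1 - a, b + (j mod 2), -j)`. -/
def aflip (n : ℕ) : GnV n ≃ GnV n where
  toFun v := (1 - v.1, v.2.1 + pr n v.2.2, -v.2.2)
  invFun v := (1 - v.1, v.2.1 + pr n v.2.2, -v.2.2)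
  left_inv v := by
    obtain ⟨a, b, j⟩ := v
    refine Prod.ext (by ring) (Prod.ext ?_ (by simp))
    show (b + pr n j) + pr n (-j) = b
    rw [map_neg]; generalize pr n j = p; revert b p; decide
  right_inv v := by
    obtain ⟨a, b, j⟩ := v
    refine Prod.ext (by ring) (Prod.ext ?_ (by simp))
    show (b + pr n j) + pr n (-j) = b
    rw [map_neg]; generalize pr n j = p; revert b p; decide

/-- Build an automorphism of `Gₙ` from an equivalence that weakly preserves neighborhoods. -/
def isoOfForward {n : ℕ} (e : GnV n ≃ GnV n)
    (h : ∀ u v : GnV n, u ∈ nbhd n v → e u ∈ nbhd n (e v) ∨ e v ∈ nbhd n (e u))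
    (h' : ∀ u v : GnV n, u ∈ nbhd n v →
      e.symm u ∈ nbhd n (e.symm v) ∨ e.symm v ∈ nbhd n (e.symm u)) :
    Gn n ≃g Gn n where
  toEquiv := e
  map_rel_iff' := by
    intro u v
    show (Gn n).Adj (e u) (e v) ↔ (Gn n).Adj u v
    constructor
    · rintro ⟨hne, hm | hm⟩
      · refine ⟨fun hh => hne (by rw [hh]), ?_⟩
        have := h' _ _ hm
        simpa using this
      · refine ⟨fun hh => hne (by rw [hh]), ?_⟩
        have := h' _ _ hm
        simp only [Equiv.symm_apply_apply] at this
        exact this.symm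
    · rintro ⟨hne, hm | hm⟩
      · exact ⟨fun hh => hne (e.injective hh), h _ _ hm⟩
      · exact ⟨fun hh => hne (e.injective hh), (h _ _ hm).symm⟩

lemma tmap_forward {n : ℕ} (c : ZMod 2) (t : ZMod (2 * n)) (u v : GnV n)
    (h : u ∈ nbhd n v) : tmap n c t u ∈ nbhd n (tmap n c t v) := by
  obtain ⟨a, b, j⟩ := v
  simp only [nbhd, Set.mem_insert_iff, Set.mem_singleton_iff, tmap, Equiv.coe_fn_mk] at h ⊢
  rcases h with rfl | rfl | rfl | rfl | rfl <;> dsimp only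
  · refine Or.inl (Prod.ext rfl (Prod.ext ?_ rfl))
    show (1 - b) + c = 1 - (b + c)
    revert b c; decide
  · refine Or.inr (Or.inl (Prod.ext rfl (Prod.ext ?_ rfl)))
    show (1 - b) + c = 1 - (b + c)
    revert b c; decide
  · exact Or.inr (Or.inr (Or.inl (Prod.ext rfl (Prod.ext (add_assoc a b c) (by ring)))))
  · exact Or.inr (Or.inr (Or.inr (Or.inl
      (Prod.ext rfl (Prod.ext (add_assoc a b c) (by ring))))))
  · exact Or.inr (Or.inr (Or.inr (Or.inr
      (Prod.ext rfl (Prod.ext (add_assoc a b c) (add_right_comm _ _ _))))))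

lemma tmap_symm_apply {n : ℕ} (c : ZMod 2) (t : ZMod (2 * n)) (v : GnV n) :
    (tmap n c t).symm v = tmap n (-c) (-t) v := by
  simp [tmap, sub_eq_add_neg]

/-- The translation automorphism of `Gₙ`. -/
def tIso (n : ℕ) (c : ZMod 2) (t : ZMod (2 * n)) : Gn n ≃g Gn n :=
  isoOfForward (tmap n c t)
    (fun u v h => Or.inl (tmap_forward c t u v h))
    (fun u v h => by
      rw [tmap_symm_apply, tmap_symm_apply]
      exact Or.inl (tmap_forward (-c) (-t) u v h))

lemma aflip_forward {n : ℕ} (u v : GnV n) (h : u ∈ nbhd n v) :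
    aflip n u ∈ nbhd n (aflip n v) ∨ aflip n v ∈ nbhd n (aflip n u) := by
  obtain ⟨a, b, j⟩ := v
  simp only [nbhd, Set.mem_insert_iff, Set.mem_singleton_iff, aflip, Equiv.coe_fn_mk] at h ⊢
  rcases h with rfl | rfl | rfl | rfl | rfl <;> dsimp only
  · refine Or.inl (Or.inl (Prod.ext (by ring) (Prod.ext ?_ rfl)))
    show (1 - b) + pr n j = 1 - (b + pr n j)
    generalize pr n j = p; revert b p; decide
  · refine Or.inl (Or.inr (Or.inl (Prod.ext rfl (Prod.ext ?_ rfl))))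
    show (1 - b) + pr n j = 1 - (b + pr n j)
    generalize pr n j = p; revert b p; decide
  · refine Or.inl (Or.inr (Or.inr (Or.inr (Or.inl (Prod.ext rfl (Prod.ext ?_ (by ring)))))))
    show (a + b) + pr n (j - 1) = 1 - a + (b + pr n j)
    rw [map_sub, map_one]; generalize pr n j = p; revert a b p; decide
  · refine Or.inl (Or.inr (Or.inr (Or.inl (Prod.ext rfl (Prod.ext ?_ (by ring))))))
    show (a + b) + pr n (j + 1) = 1 - a + (b + pr n j)
    rw [map_add, map_one]; generalize pr n j = p; revert a b p; decide
  · refine Or.inr (Or.inr (Or.inr (Or.inr (Or.inr ?_))))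
    rcases zmod2_cases a with rfl | rfl
    · rw [if_pos rfl]
      refine Prod.ext (by show (1 - 0 : ZMod 2) = 1 - (1 - (1 - 0)); decide) (Prod.ext ?_ ?_)
      · show b + pr n j = 1 - (1 - 0) + (0 + b + pr n (j + 2))
        rw [map_add, pr_two]; generalize pr n j = p; revert b p; decide
      · show -j = -(j + 2) + if 1 - (1 - (0:ZMod 2)) = 0 then 2 else -2
        rw [if_pos (by decide)]; ring
    · rw [if_neg (by decide : ¬ ((1:ZMod 2) = 0))]
      refine Prod.ext (by show (1 - 1 : ZMod 2) = 1 - (1 - (1 - 1)); decide) (Prod.ext ?_ ?_)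
      · show b + pr n j = 1 - (1 - 1) + (1 + b + pr n (j + -2))
        rw [map_add, map_neg, pr_two]; generalize pr n j = p; revert b p; decide
      · show -j = -(j + -2) + if 1 - (1 - (1:ZMod 2)) = 0 then 2 else -2
        rw [if_neg (by decide)]; ring

lemma aflip_symm_apply {n : ℕ} (v : GnV n) : (aflip n).symm v = aflip n v := rfl

/-- The `a`-flip automorphism of `Gₙ`. -/
def aIso (n : ℕ) : Gn n ≃g Gn n :=
  isoOfForward (aflip n) aflip_forward
    (fun u v h => by rw [aflip_symm_apply, aflip_symm_apply]; exact aflip_forward u v h)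

/-- Every vertex can be moved to `(0,0,0)` by an automorphism. -/
lemma to_zero {n : ℕ} (v : GnV n) : ∃ φ : Gn n ≃g Gn n, φ v = ((0, 0, 0) : GnV n) := by
  obtain ⟨a, b, j⟩ := v
  rcases zmod2_cases a with rfl | rfl
  · refine ⟨tIso n b (-j), ?_⟩
    show ((0 : ZMod 2), b + b, j + -j) = ((0 : ZMod 2), (0 : ZMod 2), (0 : ZMod (2*n)))
    refine Prod.ext rfl (Prod.ext ?_ (by simp))
    show b + b = 0
    revert b; decide
  · refine ⟨(aIso n).trans (tIso n (b + pr n j) j), ?_⟩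
    show (tIso n (b + pr n j) j) ((aIso n) (1, b, j)) = _
    show ((1 : ZMod 2) - 1, (b + pr n j) + (b + pr n j), -j + j) =
      ((0 : ZMod 2), (0 : ZMod 2), (0 : ZMod (2*n)))
    refine Prod.ext (by show (1 : ZMod 2) - 1 = 0; decide) (Prod.ext ?_ (by simp))
    show (b + pr n j) + (b + pr n j) = 0
    generalize pr n j = p; revert b p; decide

/-- `Gₙ` is vertex-transitive: for every two vertices `v` and `v'` there is an automorphism
of `Gₙ` sending `v` to `v'`. -/
theorem Gn_vertexTransitive (n : ℕ) (hn : 2 ≤ n) (v v' : GnV n) :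
    ∃ φ : Gn n ≃g Gn n, φ v = v' := by
  obtain ⟨φ, hφ⟩ := to_zero v
  obtain ⟨ψ, hψ⟩ := to_zero v'
  refine ⟨φ.trans ψ.symm, ?_⟩
  show ψ.symm (φ v) = v'
  rw [hφ, ← hψ]
  exact ψ.symm_apply_apply v'
end
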